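/- Let C̃, R̃, Ũ be matrices, E_C, E_R perturbations, and τ > 0. Suppose ‖C̃ [Ũ]†_τ‖₂ ≤ γ_C and ‖[Ũ]†_τ R̃‖₂ ≤ γ_R. Then ‖C̃ [Ũ]†_τ R̃ − (C̃ − E_C)[Ũ]†_τ(R̃ − E_R)‖_F ≤ γ_C ‖E_R‖_F + γ_R ‖E_C‖_F + (1/τ)‖E_C‖_F ‖E_R‖_F. -/

import Mathlib

open Matrix

/-- Frobenius norm of a real matrix. -/
noncomputable def frobNorm {m n : Type*} [Fintype m] [Fintype n]
    (A : Matrix m n ℝ) : ℝ := Real.sqrt (∑ i, ∑ j, (A i j) ^ 2)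

/-- Spectral (operator) norm of a real matrix. -/
noncomputable def specNorm {m n : ℕ} (A : Matrix (Fin m) (Fin n) ℝ) : ℝ :=
  ‖LinearMap.toContinuousLinearMap (Matrix.toEuclideanLin A)‖

/-- `B` is the Moore–Penrose pseudoinverse of `A`. -/
def IsMPInv {m n : ℕ} (A : Matrix (Fin m) (Fin n) ℝ)
    (B : Matrix (Fin n) (Fin m) ℝ) : Prop :=
  A * B * A = A ∧ B * A * B = B ∧ (A * B)ᵀ = A * B ∧ (B * A)ᵀ = B * A

/-- `B` is the `τ`-truncated Moore–Penrose pseudoinverse of `A`: singular values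
of `A` below `τ` are set to zero before pseudoinverting. -/
def IsTruncatedPinv {m n : ℕ} (A : Matrix (Fin m) (Fin n) ℝ) (τ : ℝ)
    (B : Matrix (Fin n) (Fin m) ℝ) : Prop :=
  ∃ (r : ℕ) (W : Matrix (Fin m) (Fin r) ℝ) (V : Matrix (Fin n) (Fin r) ℝ)
    (σ : Fin r → ℝ),
    Wᵀ * W = 1 ∧ Vᵀ * V = 1 ∧ (∀ i, 0 < σ i) ∧
    A = W * Matrix.diagonal σ * Vᵀ ∧
    B = V * Matrix.diagonal (fun i => if τ ≤ σ i then (σ i)⁻¹ else 0) * Wᵀ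

/-- `B` is `A` with its singular values below `τ` set to zero. -/
def IsTruncation {m n : ℕ} (A : Matrix (Fin m) (Fin n) ℝ) (τ : ℝ)
    (B : Matrix (Fin m) (Fin n) ℝ) : Prop :=
  ∃ (r : ℕ) (W : Matrix (Fin m) (Fin r) ℝ) (V : Matrix (Fin n) (Fin r) ℝ)
    (σ : Fin r → ℝ),
    Wᵀ * W = 1 ∧ Vᵀ * V = 1 ∧ (∀ i, 0 < σ i) ∧
    A = W * Matrix.diagonal σ * Vᵀ ∧
    B = W * Matrix.diagonal (fun i => if τ ≤ σ i then σ i else 0) * Vᵀ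

-- frobNorm as a euclidean norm
lemma frobNorm_eq_norm {m n : ℕ} (A : Matrix (Fin m) (Fin n) ℝ) :
    frobNorm A = ‖(WithLp.equiv 2 (Fin m × Fin n → ℝ)).symm (fun p => A p.1 p.2)‖ := by
  rw [EuclideanSpace.norm_eq, frobNorm]
  congr 1
  rw [← Finset.sum_product']
  simp [sq_abs]

lemma frobNorm_nonneg {m n : ℕ} (A : Matrix (Fin m) (Fin n) ℝ) : 0 ≤ frobNorm A :=
  Real.sqrt_nonneg _

lemma frobNorm_add_le {m n : ℕ} (A B : Matrix (Fin m) (Fin n) ℝ) :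
    frobNorm (A + B) ≤ frobNorm A + frobNorm B := by
  rw [frobNorm_eq_norm, frobNorm_eq_norm, frobNorm_eq_norm]
  have : ((WithLp.equiv 2 (Fin m × Fin n → ℝ)).symm (fun p => (A + B) p.1 p.2))
      = (WithLp.equiv 2 (Fin m × Fin n → ℝ)).symm (fun p => A p.1 p.2)
        + (WithLp.equiv 2 (Fin m × Fin n → ℝ)).symm (fun p => B p.1 p.2) := by
    ext p; simp [Matrix.add_apply]
  rw [this]; exact norm_add_le _ _

lemma frobNorm_sub_le {m n : ℕ} (A B : Matrix (Fin m) (Fin n) ℝ) :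
    frobNorm (A - B) ≤ frobNorm A + frobNorm B := by
  have h := frobNorm_add_le A (-B)
  have hN : frobNorm (-B) = frobNorm B := by
    simp [frobNorm]
  simpa [sub_eq_add_neg, hN] using h

lemma frobNorm_sq {m n : ℕ} (A : Matrix (Fin m) (Fin n) ℝ) :
    (frobNorm A)^2 = ∑ i, ∑ j, (A i j)^2 := by
  rw [frobNorm, Real.sq_sqrt (by positivity)]

lemma euclid_norm_sq {n : ℕ} (x : EuclideanSpace ℝ (Fin n)) :
    ‖x‖^2 = ∑ i, (x i)^2 := by
  rw [EuclideanSpace.norm_eq, Real.sq_sqrt (by positivity)]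
  simp [sq_abs]

lemma frobNorm_transpose {m n : ℕ} (A : Matrix (Fin m) (Fin n) ℝ) :
    frobNorm Aᵀ = frobNorm A := by
  rw [frobNorm, frobNorm, Finset.sum_comm]
  rfl

lemma specNorm_nonneg {m n : ℕ} (A : Matrix (Fin m) (Fin n) ℝ) : 0 ≤ specNorm A :=
  norm_nonneg _

lemma clm_apply_col {m k n : ℕ} (A : Matrix (Fin m) (Fin k) ℝ) (B : Matrix (Fin k) (Fin n) ℝ)
    (j : Fin n) :
    (LinearMap.toContinuousLinearMap (Matrix.toEuclideanLin A))
      ((WithLp.equiv 2 (Fin k → ℝ)).symm (fun i => B i j))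
      = (WithLp.equiv 2 (Fin m → ℝ)).symm (fun i => (A * B) i j) := by
  simp only [LinearMap.coe_toContinuousLinearMap', Matrix.toEuclideanLin_apply]
  congr 1

lemma spec_mul_frob {m k n : ℕ} (A : Matrix (Fin m) (Fin k) ℝ)
    (B : Matrix (Fin k) (Fin n) ℝ) :
    frobNorm (A * B) ≤ specNorm A * frobNorm B := by
  have hA : 0 ≤ specNorm A := specNorm_nonneg A
  have h2 : (frobNorm (A * B))^2 ≤ (specNorm A * frobNorm B)^2 := by
    rw [frobNorm_sq, mul_pow, frobNorm_sq]
    have key : ∀ j : Fin n, ∑ i, ((A * B) i j)^2 ≤ specNorm A ^2 * ∑ i, (B i j)^2 := by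
      intro j
      set c : EuclideanSpace ℝ (Fin k) := (WithLp.equiv 2 (Fin k → ℝ)).symm (fun i => B i j)
      have h1 : ∑ i, ((A * B) i j)^2
          = ‖(LinearMap.toContinuousLinearMap (Matrix.toEuclideanLin A)) c‖^2 := by
        rw [clm_apply_col, euclid_norm_sq]
        rfl
      have h3 : ‖(LinearMap.toContinuousLinearMap (Matrix.toEuclideanLin A)) c‖
          ≤ specNorm A * ‖c‖ := ContinuousLinearMap.le_opNorm _ _
      have h4 : ‖c‖^2 = ∑ i, (B i j)^2 := euclid_norm_sq c
      calc ∑ i, ((A * B) i j)^2 = _ := h1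
        _ ≤ (specNorm A * ‖c‖)^2 := by
            apply pow_le_pow_left₀ (norm_nonneg _) h3
        _ = specNorm A ^2 * ∑ i, (B i j)^2 := by rw [mul_pow, h4]
    calc ∑ i, ∑ j, ((A * B) i j)^2 = ∑ j, ∑ i, ((A * B) i j)^2 := Finset.sum_comm
      _ ≤ ∑ j, (specNorm A ^2 * ∑ i, (B i j)^2) := Finset.sum_le_sum fun j _ => key j
      _ = specNorm A ^2 * ∑ j, ∑ i, (B i j)^2 := (Finset.mul_sum _ _ _).symm
      _ = specNorm A ^2 * ∑ i, ∑ j, (B i j)^2 := by rw [Finset.sum_comm]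
  have := Real.sqrt_le_sqrt h2
  rwa [Real.sqrt_sq (frobNorm_nonneg _),
    Real.sqrt_sq (mul_nonneg hA (frobNorm_nonneg _))] at this

lemma specNorm_transpose {m n : ℕ} (A : Matrix (Fin m) (Fin n) ℝ) :
    specNorm Aᵀ = specNorm A := by
  have h : Aᵀ = Aᴴ := (Matrix.conjTranspose_eq_transpose_of_trivial A).symm
  rw [specNorm, h, Matrix.toEuclideanLin_conjTranspose_eq_adjoint,
    LinearMap.adjoint_toContinuousLinearMap]
  exact ContinuousLinearMap.adjoint.norm_map _

lemma frob_mul_spec {m k n : ℕ} (A : Matrix (Fin m) (Fin k) ℝ)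
    (B : Matrix (Fin k) (Fin n) ℝ) :
    frobNorm (A * B) ≤ frobNorm A * specNorm B := by
  have := spec_mul_frob Bᵀ Aᵀ
  rw [← Matrix.transpose_mul, frobNorm_transpose, specNorm_transpose,
    frobNorm_transpose] at this
  linarith

lemma specNorm_le_frobNorm {m n : ℕ} (A : Matrix (Fin m) (Fin n) ℝ) :
    specNorm A ≤ frobNorm A := by
  apply ContinuousLinearMap.opNorm_le_bound _ (frobNorm_nonneg A)
  intro x
  have h2 : ‖(LinearMap.toContinuousLinearMap (Matrix.toEuclideanLin A)) x‖^2
      ≤ (frobNorm A * ‖x‖)^2 := by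
    have hx : ((LinearMap.toContinuousLinearMap (Matrix.toEuclideanLin A)) x : Fin m → ℝ)
        = fun i => ∑ k, A i k * x k := by
      ext i
      simp [LinearMap.coe_toContinuousLinearMap', Matrix.toEuclideanLin_apply,
        Matrix.mulVec, dotProduct]
    rw [euclid_norm_sq, mul_pow, frobNorm_sq, euclid_norm_sq, Finset.sum_mul]
    apply Finset.sum_le_sum
    intro i _
    have := Finset.sum_mul_sq_le_sq_mul_sq Finset.univ (fun k => A i k) (fun k => x k)
    calc (((LinearMap.toContinuousLinearMap (Matrix.toEuclideanLin A)) x : Fin m → ℝ) i)^2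
        = (∑ k, A i k * x k)^2 := by rw [hx]
      _ ≤ (∑ k, (A i k)^2) * ∑ k, (x k)^2 := this
  have := Real.sqrt_le_sqrt h2
  rwa [Real.sqrt_sq (norm_nonneg _),
    Real.sqrt_sq (mul_nonneg (frobNorm_nonneg _) (norm_nonneg _))] at this

lemma orth_mulVec_dot {p r : ℕ} {W : Matrix (Fin p) (Fin r) ℝ} (hW : Wᵀ * W = 1)
    (z : Fin r → ℝ) : (W *ᵥ z) ⬝ᵥ (W *ᵥ z) = z ⬝ᵥ z := by
  rw [Matrix.dotProduct_mulVec]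
  have h : (W *ᵥ z) ᵥ* W = z := by
    have h1 : W *ᵥ z = z ᵥ* Wᵀ := by
      rw [← Matrix.mulVec_transpose, Matrix.transpose_transpose]
    rw [h1, Matrix.vecMul_vecMul, hW, Matrix.vecMul_one]
  rw [h]

lemma orth_transpose_dot_le {p r : ℕ} {W : Matrix (Fin p) (Fin r) ℝ} (hW : Wᵀ * W = 1)
    (x : Fin p → ℝ) : (Wᵀ *ᵥ x) ⬝ᵥ (Wᵀ *ᵥ x) ≤ x ⬝ᵥ x := by
  set z := Wᵀ *ᵥ x with hz
  have hzW : x ᵥ* W = z := by rw [hz, Matrix.mulVec_transpose]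
  have h1 : z ⬝ᵥ z = x ⬝ᵥ (W *ᵥ z) := by rw [Matrix.dotProduct_mulVec x W z, hzW]
  have hcs : (x ⬝ᵥ (W *ᵥ z))^2 ≤ (x ⬝ᵥ x) * ((W *ᵥ z) ⬝ᵥ (W *ᵥ z)) := by
    have := Finset.sum_mul_sq_le_sq_mul_sq Finset.univ x (W *ᵥ z)
    simpa [dotProduct, pow_two, mul_comm, Finset.mul_sum, mul_assoc] using this
  rw [orth_mulVec_dot hW] at hcs
  rw [← h1] at hcs
  have hz0 : (0:ℝ) ≤ z ⬝ᵥ z := Finset.sum_nonneg fun i _ => mul_self_nonneg _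
  have hx0 : (0:ℝ) ≤ x ⬝ᵥ x := Finset.sum_nonneg fun i _ => mul_self_nonneg _
  nlinarith [hcs, hz0, hx0]

lemma specNorm_truncpinv_le {p : ℕ} {Ut Utpinv : Matrix (Fin p) (Fin p) ℝ} {τ : ℝ}
    (hτ : 0 < τ) (h : IsTruncatedPinv Ut τ Utpinv) : specNorm Utpinv ≤ 1/τ := by
  obtain ⟨r, W, V, σ, hW, hV, hσ, -, hB⟩ := h
  apply ContinuousLinearMap.opNorm_le_bound _ (by positivity)
  intro x
  set d : Fin r → ℝ := fun i => if τ ≤ σ i then (σ i)⁻¹ else 0 with hd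
  set x' : Fin p → ℝ := WithLp.equiv 2 (Fin p → ℝ) x with hx'
  have hLx : ((LinearMap.toContinuousLinearMap (Matrix.toEuclideanLin Utpinv)) x
      : Fin p → ℝ) = Utpinv *ᵥ x' := by
    simp [LinearMap.coe_toContinuousLinearMap', Matrix.toEuclideanLin_apply]
    rfl
  set z : Fin r → ℝ := Wᵀ *ᵥ x' with hzdef
  have hsplit : Utpinv *ᵥ x' = V *ᵥ ((Matrix.diagonal d) *ᵥ z) := by
    rw [hB, Matrix.mulVec_mulVec, Matrix.mulVec_mulVec]
  have hstep1 : ∀ i, ((Matrix.diagonal d *ᵥ z) i)^2 ≤ τ⁻¹^2 * (z i)^2 := by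
    intro i
    rw [Matrix.mulVec_diagonal, mul_pow]
    apply mul_le_mul_of_nonneg_right _ (sq_nonneg _)
    have hd0 : 0 ≤ d i := by
      by_cases hc : τ ≤ σ i
      · simp only [hd]; rw [if_pos hc]; exact inv_nonneg.mpr (hσ i).le
      · simp only [hd]; rw [if_neg hc]
    have hd1 : d i ≤ τ⁻¹ := by
      by_cases hc : τ ≤ σ i
      · simp only [hd]; rw [if_pos hc]; exact inv_anti₀ hτ hc
      · simp only [hd]; rw [if_neg hc]; positivity
    nlinarith [hd0, hd1]
  have h2 : (Matrix.diagonal d *ᵥ z) ⬝ᵥ (Matrix.diagonal d *ᵥ z) ≤ τ⁻¹^2 * (z ⬝ᵥ z) := by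
    simp only [dotProduct, ← pow_two, Finset.mul_sum]
    exact Finset.sum_le_sum fun i _ => hstep1 i
  have h3 : z ⬝ᵥ z ≤ x' ⬝ᵥ x' := orth_transpose_dot_le hW x'
  have hnorm : ‖(LinearMap.toContinuousLinearMap (Matrix.toEuclideanLin Utpinv)) x‖^2
      ≤ (1/τ * ‖x‖)^2 := by
    rw [euclid_norm_sq]
    have he : ∀ i, ((LinearMap.toContinuousLinearMap (Matrix.toEuclideanLin Utpinv)) x) i
        = (Utpinv *ᵥ x') i := fun i => congrFun hLx i
    have hsum : ∑ i, (((LinearMap.toContinuousLinearMap (Matrix.toEuclideanLin Utpinv)) x) i)^2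
        = (Utpinv *ᵥ x') ⬝ᵥ (Utpinv *ᵥ x') := by
      simp only [he, dotProduct, pow_two]
    rw [hsum, hsplit, orth_mulVec_dot hV]
    have hxnorm : ‖x‖^2 = x' ⬝ᵥ x' := by
      rw [euclid_norm_sq]
      simp only [dotProduct, pow_two]
      rfl
    calc (Matrix.diagonal d *ᵥ z) ⬝ᵥ (Matrix.diagonal d *ᵥ z)
        ≤ τ⁻¹^2 * (z ⬝ᵥ z) := h2
      _ ≤ τ⁻¹^2 * (x' ⬝ᵥ x') := by
          apply mul_le_mul_of_nonneg_left h3 (by positivity)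
      _ = (1/τ * ‖x‖)^2 := by rw [mul_pow, hxnorm, one_div]
  have := Real.sqrt_le_sqrt hnorm
  rwa [Real.sqrt_sq (norm_nonneg _),
    Real.sqrt_sq (by positivity)] at this

/-- perturbation bound through a truncated pseudoinverse. -/
theorem cross_perturbation_bound {m p n : ℕ}
    (Ct EC : Matrix (Fin m) (Fin p) ℝ) (Ut Utpinv : Matrix (Fin p) (Fin p) ℝ)
    (Rt ER : Matrix (Fin p) (Fin n) ℝ) (τ γC γR : ℝ) (hτ : 0 < τ)
    (hUt : IsTruncatedPinv Ut τ Utpinv)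
    (hγC : specNorm (Ct * Utpinv) ≤ γC) (hγR : specNorm (Utpinv * Rt) ≤ γR) :
    frobNorm (Ct * Utpinv * Rt - (Ct - EC) * Utpinv * (Rt - ER))
      ≤ γC * frobNorm ER + γR * frobNorm EC
        + (1 / τ) * frobNorm EC * frobNorm ER := by
  have hid : Ct * Utpinv * Rt - (Ct - EC) * Utpinv * (Rt - ER)
      = Ct * Utpinv * ER + EC * Utpinv * Rt - EC * Utpinv * ER := by
    simp only [Matrix.sub_mul, Matrix.mul_sub]
    abel
  rw [hid]
  have hU : specNorm Utpinv ≤ 1/τ := specNorm_truncpinv_le hτ hUt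
  have t1 : frobNorm (Ct * Utpinv * ER) ≤ γC * frobNorm ER := by
    calc frobNorm (Ct * Utpinv * ER) ≤ specNorm (Ct * Utpinv) * frobNorm ER :=
          spec_mul_frob _ _
      _ ≤ γC * frobNorm ER := mul_le_mul_of_nonneg_right hγC (frobNorm_nonneg _)
  have t2 : frobNorm (EC * Utpinv * Rt) ≤ γR * frobNorm EC := by
    rw [Matrix.mul_assoc]
    calc frobNorm (EC * (Utpinv * Rt)) ≤ frobNorm EC * specNorm (Utpinv * Rt) :=
          frob_mul_spec _ _
      _ ≤ frobNorm EC * γR := mul_le_mul_of_nonneg_left hγR (frobNorm_nonneg _)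
      _ = γR * frobNorm EC := mul_comm _ _
  have t3 : frobNorm (EC * Utpinv * ER) ≤ 1/τ * frobNorm EC * frobNorm ER := by
    rw [Matrix.mul_assoc]
    calc frobNorm (EC * (Utpinv * ER)) ≤ frobNorm EC * specNorm (Utpinv * ER) :=
          frob_mul_spec _ _
      _ ≤ frobNorm EC * frobNorm (Utpinv * ER) :=
          mul_le_mul_of_nonneg_left (specNorm_le_frobNorm _) (frobNorm_nonneg _)
      _ ≤ frobNorm EC * (specNorm Utpinv * frobNorm ER) :=
          mul_le_mul_of_nonneg_left (spec_mul_frob _ _) (frobNorm_nonneg _)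
      _ ≤ frobNorm EC * (1/τ * frobNorm ER) := by
          apply mul_le_mul_of_nonneg_left _ (frobNorm_nonneg _)
          exact mul_le_mul_of_nonneg_right hU (frobNorm_nonneg _)
      _ = 1/τ * frobNorm EC * frobNorm ER := by ring
  calc frobNorm (Ct * Utpinv * ER + EC * Utpinv * Rt - EC * Utpinv * ER)
      ≤ frobNorm (Ct * Utpinv * ER + EC * Utpinv * Rt) + frobNorm (EC * Utpinv * ER) :=
        frobNorm_sub_le _ _
    _ ≤ frobNorm (Ct * Utpinv * ER) + frobNorm (EC * Utpinv * Rt)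
          + frobNorm (EC * Utpinv * ER) := by
        linarith [frobNorm_add_le (Ct * Utpinv * ER) (EC * Utpinv * Rt)]
    _ ≤ γC * frobNorm ER + γR * frobNorm EC + 1/τ * frobNorm EC * frobNorm ER := by
        linarith
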